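/- The vector u = (0, 0, b/(3+17b), 0, 0, 2b/(3+17b), (2b+√(1−b²))/(6+34b), 0)ᵀ lies in the range of the partial transpose of ρ^[2](b) with respect to the third qubit, for b ∈ (0,1). -/
import Mathlib


noncomputable section

open scoped BigOperators ComplexOrder

abbrev Q3 := Fin 2 × Fin 2 × Fin 2

/-- lexicographic encoding of the 3-qubit basis -/
def enc (x : Q3) : Fin 8 :=
  ⟨4 * x.1.val + 2 * x.2.1.val + x.2.2.val, by
    have h1 := x.1.isLt; have h2 := x.2.1.isLt; have h3 := x.2.2.isLt; omega⟩

def Gam (b : ℝ) : ℝ := b / (1 + 7*b)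
def Lam (b : ℝ) : ℝ := (1 + 3*b) / (6 * (1 + 7*b))
def Del (b : ℝ) : ℝ := (1 + 5*b) / (6 * (1 + 7*b))
def zet (b : ℝ) : ℝ := (1 + b) / (2 * (1 + 7*b))
noncomputable def Ome (b : ℝ) : ℝ := (2*b + Real.sqrt (1 - b^2)) / (6 * (1 + 7*b))
def Theta (b : ℝ) : ℝ := (3 + 21*b) / (3 + 17*b)

/-- the matrix N of ρ^[2](b) = Θ·N, in the lexicographic basis -/
noncomputable def Nmat (b : ℝ) : Matrix (Fin 8) (Fin 8) ℝ :=
  !![Gam b, 0, 0, Gam b / 3, 0, Gam b / 3, Gam b / 3, 0;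
     0, Lam b, Lam b, 0, 0, 0, 0, Ome b;
     0, Lam b, Lam b, 0, 0, 0, 0, Ome b;
     Gam b / 3, 0, 0, Gam b, Gam b / 3, 0, 0, 0;
     0, 0, 0, Gam b / 3, Del b, 0, 0, Ome b;
     Gam b / 3, 0, 0, 0, 0, 2 * Gam b / 3, 2 * Gam b / 3, 0;
     Gam b / 3, 0, 0, 0, 0, 2 * Gam b / 3, 2 * Gam b / 3, 0;
     0, Ome b, Ome b, 0, Ome b, 0, 0, zet b]

/-- the state ρ^[2](b) as an operator on ℂ²⊗ℂ²⊗ℂ² -/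
noncomputable def rho2 (b : ℝ) : Matrix Q3 Q3 ℂ :=
  Matrix.of fun x y => ((Theta b * Nmat b (enc x) (enc y) : ℝ) : ℂ)

/-- partial transpose with respect to the first qubit -/
def ptA (ρ : Matrix Q3 Q3 ℂ) : Matrix Q3 Q3 ℂ :=
  Matrix.of fun x y => ρ (y.1, x.2) (x.1, y.2)

/-- partial transpose with respect to the third qubit -/
def ptC (ρ : Matrix Q3 Q3 ℂ) : Matrix Q3 Q3 ℂ :=
  Matrix.of fun x y => ρ (x.1, x.2.1, y.2.2) (y.1, y.2.1, x.2.2)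

/-- the vector u -/
noncomputable def uVec (b : ℝ) : Q3 → ℂ :=
  fun x =>
    (![0, 0, ((b / (3 + 17*b) : ℝ) : ℂ), 0, 0, ((2*b / (3 + 17*b) : ℝ) : ℂ),
       (((2*b + Real.sqrt (1 - b^2)) / (6 + 34*b) : ℝ) : ℂ), 0] : Fin 8 → ℂ) (enc x)

theorem uVec_in_range_of_ptC_rho2 (b : ℝ) (hb0 : 0 < b) (hb1 : b < 1) :
    ∃ w : Q3 → ℂ, (ptC (rho2 b)).mulVec w = uVec b := by

  refine ⟨fun y => if y = ((1 : Fin 2), (0 : Fin 2), (1 : Fin 2)) then 1 else 0, ?_⟩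
  have h1 : (1 : ℝ) + 7*b > 0 := by linarith
  have h2 : (3 : ℝ) + 17*b > 0 := by linarith
  funext x
  rw [Matrix.mulVec, dotProduct]
  rw [Finset.sum_eq_single ((1 : Fin 2), (0 : Fin 2), (1 : Fin 2))]
  · fin_cases x <;>
      simp only [ptC, rho2, uVec, Nmat, enc, Matrix.of_apply, if_pos rfl, mul_one] <;>
      norm_num [Matrix.cons_val', Matrix.cons_val_zero, Matrix.cons_val_one,
        Matrix.head_cons, Matrix.empty_val', Matrix.cons_val_fin_one, Theta, Gam, Lam,
        Del, zet, Ome, Fin.isValue] <;>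
      · have h1c : (1 : ℂ) + 7*(b:ℂ) ≠ 0 := by
          have := Complex.ofReal_ne_zero.mpr h1.ne'
          push_cast at this; exact this
        have h2c : (3 : ℂ) + 17*(b:ℂ) ≠ 0 := by
          have := Complex.ofReal_ne_zero.mpr h2.ne'
          push_cast at this; exact this
        field_simp
        ring
  · intro y _ hy
    simp [hy]
  · intro h
    exact absurd (Finset.mem_univ _) h
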